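/- Let A be a feasible Steiner forest with components A_1,…,A_p numbered by nondecreasing width, and assume A is c-approximate connecting move optimal. Let C=(v_1,…,v_l) be a circuit in G_A with edges (e_1,…,e_l). If C is minimally guarded, then Σ_{i=2}^{l−1} w(A_{v_i}) ≤ c·Σ_{i=1}^{l} d_{e_i} = c·d(C). -/

import Mathlib

open Finset

attribute [local instance] Classical.propDecidable

variable {V : Type*} [Fintype V] [DecidableEq V]

/-- The simple graph on `V` induced by a finite set of (undirected) edges. -/
def graphOf (F : Finset (Sym2 V)) : SimpleGraph V where
  Adj u v := u ≠ v ∧ s(u, v) ∈ F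
  symm := by
    constructor
    intro u v h
    refine ⟨Ne.symm h.1, ?_⟩
    rw [Sym2.eq_swap]
    exact h.2
  loopless := by constructor; intro v h; exact h.1 rfl

/-- The set of vertices incident to at least one edge of `F` (denoted `V[F]` in the paper). -/
def supp (F : Finset (Sym2 V)) : Set V := {v | ∃ e ∈ F, v ∈ e}

/-- A Steiner forest `F` is feasible for the terminal pairs `T` if it connects every pair. -/
def Feasible (F : Finset (Sym2 V)) (T : Finset (V × V)) : Prop :=
  ∀ p ∈ T, (graphOf F).Reachable p.1 p.2

/-- Total edge cost `d(F)`. -/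
def cost (d : Sym2 V → ℝ) (F : Finset (Sym2 V)) : ℝ := ∑ e ∈ F, d e

/-- `A` is a tree (on its vertex support): loopless edges, acyclic, connected on `V[A]`. -/
def IsTreeSol (A : Finset (Sym2 V)) : Prop :=
  (∀ e ∈ A, ¬ e.IsDiag) ∧ (graphOf A).IsAcyclic ∧
    ∀ u ∈ supp A, ∀ v ∈ supp A, (graphOf A).Reachable u v

/-- Shortest-path distance between `u` and `v` in the graph with edge set `Eall`
and edge lengths `d`. -/
noncomputable def wdist (Eall : Finset (Sym2 V)) (d : Sym2 V → ℝ) (u v : V) : ℝ :=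
  ⨅ p : (graphOf Eall).Walk u v, (p.edges.map d).sum

/-- Width of a vertex set `W`: the largest shortest-path distance of a terminal pair
whose two members both lie in `W`. -/
noncomputable def widthSet (Eall : Finset (Sym2 V)) (d : Sym2 V → ℝ) (T : Finset (V × V))
    (W : Set V) : ℝ :=
  sSup {x : ℝ | ∃ p ∈ T, p.1 ∈ W ∧ p.2 ∈ W ∧ x = wdist Eall d p.1 p.2}

/-- Total width `w(F)`: the sum of the widths of the connected components of `F`. -/
noncomputable def totalWidth (Eall : Finset (Sym2 V)) (d : Sym2 V → ℝ) (T : Finset (V × V))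
    (F : Finset (Sym2 V)) : ℝ :=
  ∑ᶠ c : (graphOf F).ConnectedComponent, widthSet Eall d T c.supp

/-- The potential `φ(F) = d(F) + w(F)`. -/
noncomputable def phi (Eall : Finset (Sym2 V)) (d : Sym2 V → ℝ) (T : Finset (V × V))
    (F : Finset (Sym2 V)) : ℝ :=
  cost d F + totalWidth Eall d T F

/-- Some edge of `F` leaves the vertex set `W`. -/
def leavesSet (F : Finset (Sym2 V)) (W : Set V) : Prop :=
  ∃ g ∈ F, ∃ x y : V, g = s(x, y) ∧ x ∈ W ∧ y ∉ W

/-- `T_{e,f}`: the connected component of `A ∖ {e,f}` containing the interior of the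
unique `e`–`f` path of the tree `A`; equivalently, the component containing an endpoint
of `e` together with an endpoint of `f`. -/
def midComp (A : Finset (Sym2 V)) (e f : Sym2 V) : Set V :=
  {v | ∃ x ∈ e, ∃ y ∈ f,
    (graphOf (A \ {e, f})).Reachable x y ∧ (graphOf (A \ {e, f})).Reachable x v}

/-- `e` and `f` are compatible w.r.t. `F` (`e ~cp f`). -/
def Compatible (A F : Finset (Sym2 V)) (e f : Sym2 V) : Prop :=
  e = f ∨ ¬ leavesSet F (midComp A e f)

/-- `e` is safe: some `F`-edge crosses between the two components of `A ∖ {e}`. -/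
def Safe (A F : Finset (Sym2 V)) (e : Sym2 V) : Prop :=
  ∃ g ∈ F, ∃ x y : V, g = s(x, y) ∧ x ≠ y ∧ ¬ (graphOf (A.erase e)).Reachable x y

/-- `e` is essential: removing it from `A` destroys feasibility. -/
def Essential (A : Finset (Sym2 V)) (T : Finset (V × V)) (e : Sym2 V) : Prop :=
  ¬ Feasible (A.erase e) T

/-- The compatibility class of the edge `e` of `A`. -/
noncomputable def cls (A F : Finset (Sym2 V)) (e : Sym2 V) : Finset (Sym2 V) :=
  A.filter (fun f => Compatible A F e f)

/-- `S_u`: the set of unsafe edges of `A`. -/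
noncomputable def unsafeCls (A F : Finset (Sym2 V)) : Finset (Sym2 V) :=
  A.filter (fun e => ¬ Safe A F e)

/-- `𝔖`: the set of compatibility classes of edges of `A`. -/
noncomputable def classes (A F : Finset (Sym2 V)) : Finset (Finset (Sym2 V)) :=
  A.image (cls A F)

/-- `e` lies on the fundamental cycle closed by adding the edge `f` to the tree `A`. -/
def onFundCycle (A : Finset (Sym2 V)) (f e : Sym2 V) : Prop :=
  e ∈ A ∧ ∀ x y : V, f = s(x, y) →
    (graphOf A).Reachable x y ∧ ¬ (graphOf (A.erase e)).Reachable x y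

/-- Edge/edge swap optimality of `A` w.r.t. added edges from `Eadd` and objective `obj`:
no swap that adds an edge `f ∈ Eadd` and removes one edge of the cycle it closes,
keeping feasibility, strictly decreases the objective. -/
def EdgeEdgeSwapOptimal (Eadd : Finset (Sym2 V)) (T : Finset (V × V))
    (obj : Finset (Sym2 V) → ℝ) (A : Finset (Sym2 V)) : Prop :=
  ∀ f ∈ Eadd, ∀ e, onFundCycle A f e →
    Feasible (A.erase e ∪ {f}) T → obj A ≤ obj (A.erase e ∪ {f})

/-- Edge/set swap optimality of `A` w.r.t. added edges from `Eadd` and objective `obj`: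
no swap that adds an edge `f ∈ Eadd` and removes a set `S` of edges of the cycle it closes,
keeping feasibility, strictly decreases the objective. -/
def EdgeSetSwapOptimal (Eadd : Finset (Sym2 V)) (T : Finset (V × V))
    (obj : Finset (Sym2 V) → ℝ) (A : Finset (Sym2 V)) : Prop :=
  ∀ f ∈ Eadd, ∀ S ⊆ A, (∀ e ∈ S, onFundCycle A f e) →
    Feasible ((A \ S) ∪ {f}) T → obj A ≤ obj ((A \ S) ∪ {f})

/-- Removing swap optimality: deleting any (feasibility preserving) edge set from `A`
does not strictly decrease the objective. -/
def RemovingSwapOptimal (T : Finset (V × V))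
    (obj : Finset (Sym2 V) → ℝ) (A : Finset (Sym2 V)) : Prop :=
  ∀ S ⊆ A, Feasible (A \ S) T → obj A ≤ obj (A \ S)

/-- Path/set swap optimality of `A`: for vertices `u, v` in the same component of `A`,
adding a set `P ⊆ Eadd` of edges (along a `u`–`v` connection) and removing a set `S` of
edges of the component of `u`, in a way that keeps `u,v` connected and the solution
feasible, does not strictly decrease the objective. -/
def PathSetSwapOptimal (Eadd : Finset (Sym2 V)) (T : Finset (V × V))
    (obj : Finset (Sym2 V) → ℝ) (A : Finset (Sym2 V)) : Prop :=
  ∀ u v : V, (graphOf A).Reachable u v →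
    ∀ P : Finset (Sym2 V), P ⊆ Eadd → ∀ S ⊆ A,
      (∀ e ∈ S, ∃ x ∈ e, (graphOf A).Reachable u x) →
      (graphOf ((A \ S) ∪ P)).Reachable u v →
      Feasible ((A \ S) ∪ P) T → obj A ≤ obj ((A \ S) ∪ P)

/-- A connected component `c` of `A ∖ S` is an *inner* component for the class `S`
if it touches (at least) two distinct edges of `S`. -/
def innerComp (A S : Finset (Sym2 V)) (c : (graphOf (A \ S)).ConnectedComponent) : Prop :=
  ∃ e ∈ S, ∃ e' ∈ S, e ≠ e' ∧ (∃ x ∈ e, (graphOf (A \ S)).connectedComponentMk x = c) ∧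
    ∃ y ∈ e', (graphOf (A \ S)).connectedComponentMk y = c

/-- The sum of the widths of the inner components `E_{S,i}`, `i ∈ In_S`, of the class `S`. -/
noncomputable def innerWidthSum (Eall : Finset (Sym2 V)) (d : Sym2 V → ℝ) (T : Finset (V × V))
    (A S : Finset (Sym2 V)) : ℝ :=
  ∑ᶠ c : (graphOf (A \ S)).ConnectedComponent,
    if innerComp A S c then widthSet Eall d T c.supp else 0

/-- `index(E')` for a vertex set `W`: the largest index `i` (in the enumeration `tp` of the
terminal pairs by nondecreasing distance) of a terminal pair lying entirely inside `W`. -/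
noncomputable def idxOf {nt : ℕ} (tp : Fin nt → V × V) (W : Set V) : ℕ :=
  sSup {i : ℕ | ∃ h : i < nt, (tp ⟨i, h⟩).1 ∈ W ∧ (tp ⟨i, h⟩).2 ∈ W}

/-- The finite vertex support of an edge set. -/
def suppF (B : Finset (Sym2 V)) : Finset V :=
  Finset.univ.filter (fun v => ∃ e ∈ B, v ∈ e)

/-- `e` crosses between two different connected components of `A`. -/
def crossingEdge (A : Finset (Sym2 V)) (e : Sym2 V) : Prop :=
  ∀ x y : V, e = s(x, y) → ¬ (graphOf A).Reachable x y

/-- The components of `A` touched by the edge set `B`, i.e. the nodes of `G_A`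
incident to `B`. -/
noncomputable def touched (A B : Finset (Sym2 V)) :
    Finset ((graphOf A).ConnectedComponent) :=
  (suppF B).image ((graphOf A).connectedComponentMk)

/-- `B` is (the edge set of) a tree in the contracted multigraph `G_A`: all its edges cross
between components of `A`, it is connected (through the components of `A` it touches), and
it has one edge less than the number of components it touches. -/
def IsGATree (A B : Finset (Sym2 V)) : Prop :=
  (∀ e ∈ B, crossingEdge A e) ∧ (touched A B).card = B.card + 1 ∧
    ∀ x ∈ suppF B, ∀ y ∈ suppF B, (graphOf (A ∪ B)).Reachable x y

/-- `A` is `c`-approximate connecting move optimal: for every tree `B` in `G_A` (with edges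
taken from `Emoves`), the total width of the components it connects, minus the largest of
these widths, is at most `c` times the length of the tree. -/
def ConnApproxOptimal (Emoves Eall : Finset (Sym2 V)) (d : Sym2 V → ℝ) (T : Finset (V × V))
    (c : ℝ) (A : Finset (Sym2 V)) : Prop :=
  ∀ B ⊆ Emoves, IsGATree A B →
    (∑ t ∈ touched A B, widthSet Eall d T t.supp)
      - (⨆ t ∈ touched A B, widthSet Eall d T t.supp) ≤ c * ∑ e ∈ B, d e

namespace S17

open Finset Relation

/-- node set of a set of abstract arcs, with endpoints given by `pr` -/
def tnodes (pr : ℕ → ℕ × ℕ) (I : Finset ℕ) : Finset ℕ :=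
  I.image (fun i => (pr i).1) ∪ I.image (fun i => (pr i).2)

lemma mem_tnodes {pr : ℕ → ℕ × ℕ} {I : Finset ℕ} {t : ℕ} :
    t ∈ tnodes pr I ↔ ∃ i ∈ I, (pr i).1 = t ∨ (pr i).2 = t := by
  simp only [tnodes, mem_union, mem_image]
  constructor
  · rintro (⟨i, hi, h⟩ | ⟨i, hi, h⟩)
    · exact ⟨i, hi, Or.inl h⟩
    · exact ⟨i, hi, Or.inr h⟩
  · rintro ⟨i, hi, h | h⟩
    · exact Or.inl ⟨i, hi, h⟩
    · exact Or.inr ⟨i, hi, h⟩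

lemma fst_mem_tnodes {pr : ℕ → ℕ × ℕ} {I : Finset ℕ} {i : ℕ} (hi : i ∈ I) :
    (pr i).1 ∈ tnodes pr I := mem_tnodes.2 ⟨i, hi, Or.inl rfl⟩

lemma snd_mem_tnodes {pr : ℕ → ℕ × ℕ} {I : Finset ℕ} {i : ℕ} (hi : i ∈ I) :
    (pr i).2 ∈ tnodes pr I := mem_tnodes.2 ⟨i, hi, Or.inr rfl⟩

lemma tnodes_mono {pr : ℕ → ℕ × ℕ} {I J : Finset ℕ} (h : I ⊆ J) :
    tnodes pr I ⊆ tnodes pr J := by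
  intro t ht
  obtain ⟨i, hi, hor⟩ := mem_tnodes.1 ht
  exact mem_tnodes.2 ⟨i, h hi, hor⟩

lemma tnodes_insert {pr : ℕ → ℕ × ℕ} {I : Finset ℕ} {i : ℕ} :
    tnodes pr (insert i I) = insert (pr i).1 (insert (pr i).2 (tnodes pr I)) := by
  ext t
  constructor
  · intro ht
    obtain ⟨j, hj, hor⟩ := mem_tnodes.1 ht
    rcases Finset.mem_insert.1 hj with rfl | hj
    · rcases hor with h | h
      · exact Finset.mem_insert.2 (Or.inl h.symm)
      · exact Finset.mem_insert.2 (Or.inr (Finset.mem_insert.2 (Or.inl h.symm)))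
    · exact Finset.mem_insert.2 (Or.inr (Finset.mem_insert.2 (Or.inr
        (mem_tnodes.2 ⟨j, hj, hor⟩))))
  · intro ht
    rcases Finset.mem_insert.1 ht with rfl | ht
    · exact mem_tnodes.2 ⟨i, Finset.mem_insert_self _ _, Or.inl rfl⟩
    rcases Finset.mem_insert.1 ht with rfl | ht
    · exact mem_tnodes.2 ⟨i, Finset.mem_insert_self _ _, Or.inr rfl⟩
    · obtain ⟨j, hj, hor⟩ := mem_tnodes.1 ht
      exact mem_tnodes.2 ⟨j, Finset.mem_insert_of_mem hj, hor⟩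

lemma tnodes_empty {pr : ℕ → ℕ × ℕ} : tnodes pr ∅ = ∅ := by simp [tnodes]

lemma tnodes_singleton {pr : ℕ → ℕ × ℕ} {i : ℕ} :
    tnodes pr ({i} : Finset ℕ) = {(pr i).1, (pr i).2} := by
  have h : ({i} : Finset ℕ) = insert i ∅ := rfl
  rw [h, tnodes_insert, tnodes_empty]; rfl

/-- step relation for connectivity of abstract arc sets -/
def tstep (pr : ℕ → ℕ × ℕ) (I : Finset ℕ) (s t : ℕ) : Prop :=
  ∃ i ∈ I, pr i = (s, t) ∨ pr i = (t, s)

lemma tstep_symm {pr : ℕ → ℕ × ℕ} {I : Finset ℕ} {s t : ℕ}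
    (h : tstep pr I s t) : tstep pr I t s := by
  obtain ⟨i, hi, h⟩ := h
  exact ⟨i, hi, h.symm⟩

lemma rtg_symm {pr : ℕ → ℕ × ℕ} {I : Finset ℕ} {s t : ℕ}
    (h : ReflTransGen (tstep pr I) s t) : ReflTransGen (tstep pr I) t s :=
  (@ReflTransGen.stdSymm _ _ ⟨fun _ _ => tstep_symm⟩).symm _ _ h

lemma tstep_mono {pr : ℕ → ℕ × ℕ} {I J : Finset ℕ} (hIJ : I ⊆ J) {s t : ℕ}
    (h : tstep pr I s t) : tstep pr J s t := by
  obtain ⟨i, hi, h⟩ := h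
  exact ⟨i, hIJ hi, h⟩

lemma rtg_mono {pr : ℕ → ℕ × ℕ} {I J : Finset ℕ} (hIJ : I ⊆ J) {s t : ℕ}
    (h : ReflTransGen (tstep pr I) s t) : ReflTransGen (tstep pr J) s t :=
  ReflTransGen.mono (fun _ _ => tstep_mono hIJ) _ _ h

lemma tstep_mem_left {pr : ℕ → ℕ × ℕ} {I : Finset ℕ} {s t : ℕ}
    (h : tstep pr I s t) : s ∈ tnodes pr I := by
  obtain ⟨i, hi, h | h⟩ := h
  · exact mem_tnodes.2 ⟨i, hi, Or.inl (by rw [h])⟩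
  · exact mem_tnodes.2 ⟨i, hi, Or.inr (by rw [h])⟩

lemma tstep_mem_right {pr : ℕ → ℕ × ℕ} {I : Finset ℕ} {s t : ℕ}
    (h : tstep pr I s t) : t ∈ tnodes pr I := tstep_mem_left (tstep_symm h)

/-- if `s ≠ t` are connected then `t` is a node -/
lemma rtg_mem_tnodes {pr : ℕ → ℕ × ℕ} {I : Finset ℕ} {s t : ℕ}
    (h : ReflTransGen (tstep pr I) s t) (hst : s ≠ t) : t ∈ tnodes pr I := by
  rcases h.cases_tail with h | ⟨c, _, hct⟩
  · exact absurd h.symm hst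
  · exact tstep_mem_right hct

/-- decomposition of connectivity upon removal of one arc `e₀` -/
lemma reach_decomp {pr : ℕ → ℕ × ℕ} {I : Finset ℕ} (e₀ : ℕ) {p q : ℕ}
    (h : ReflTransGen (tstep pr I) p q) :
    ReflTransGen (tstep pr (I.erase e₀)) p q ∨
    (ReflTransGen (tstep pr (I.erase e₀)) p (pr e₀).1 ∧
      ReflTransGen (tstep pr (I.erase e₀)) (pr e₀).2 q) ∨
    (ReflTransGen (tstep pr (I.erase e₀)) p (pr e₀).2 ∧
      ReflTransGen (tstep pr (I.erase e₀)) (pr e₀).1 q) := by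
  induction h with
  | refl => exact Or.inl ReflTransGen.refl
  | @tail z w hpz hzw ih =>
    obtain ⟨i, hiI, hor⟩ := hzw
    by_cases hie : i = e₀
    · subst hie
      rcases hor with h1 | h1
      · obtain ⟨hz, hw⟩ : z = (pr i).1 ∧ w = (pr i).2 := by rw [h1]; exact ⟨rfl, rfl⟩
        subst hz; subst hw
        rcases ih with ih | ⟨iha, ihb⟩ | ⟨iha, ihb⟩
        · exact Or.inr (Or.inl ⟨ih, ReflTransGen.refl⟩)
        · exact Or.inl (iha.trans (rtg_symm ihb))
        · exact Or.inl iha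
      · obtain ⟨hw, hz⟩ : w = (pr i).1 ∧ z = (pr i).2 := by rw [h1]; exact ⟨rfl, rfl⟩
        subst hz; subst hw
        rcases ih with ih | ⟨iha, ihb⟩ | ⟨iha, ihb⟩
        · exact Or.inr (Or.inr ⟨ih, ReflTransGen.refl⟩)
        · exact Or.inl iha
        · exact Or.inl (iha.trans (rtg_symm ihb))
    · have hstep : tstep pr (I.erase e₀) z w := ⟨i, Finset.mem_erase.2 ⟨hie, hiI⟩, hor⟩
      rcases ih with ih | ⟨iha, ihb⟩ | ⟨iha, ihb⟩
      · exact Or.inl (ih.tail hstep)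
      · exact Or.inr (Or.inl ⟨iha, ihb.tail hstep⟩)
      · exact Or.inr (Or.inr ⟨iha, ihb.tail hstep⟩)

def tconn (pr : ℕ → ℕ × ℕ) (I : Finset ℕ) : Prop :=
  ∀ x ∈ tnodes pr I, ∀ y ∈ tnodes pr I, ReflTransGen (tstep pr I) x y

/-- abstract tree on arcs -/
def ATree (pr : ℕ → ℕ × ℕ) (I : Finset ℕ) : Prop :=
  I.Nonempty ∧ (tnodes pr I).card = I.card + 1 ∧ tconn pr I

/-- value of a node set: sum of weights minus weight of the max node -/
noncomputable def nval (W : ℕ → ℝ) (s : Finset ℕ) : ℝ :=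
  (∑ t ∈ s, W t) - W (s.sup id)

noncomputable def tval (pr : ℕ → ℕ × ℕ) (W : ℕ → ℝ) (I : Finset ℕ) : ℝ :=
  nval W (tnodes pr I)

lemma sup_mem_of_nonempty {s : Finset ℕ} (hs : s.Nonempty) : s.sup id ∈ s := by
  obtain ⟨b, hb, he⟩ := Finset.exists_mem_eq_sup s hs id
  rw [he]; exact hb

lemma nval_nonneg {W : ℕ → ℝ} (hW0 : ∀ t, 0 ≤ W t) {s : Finset ℕ} (hs : s.Nonempty) :
    0 ≤ nval W s := by
  unfold nval
  have hmem := sup_mem_of_nonempty hs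
  have h1 : W (s.sup id) ≤ ∑ t ∈ s, W t :=
    Finset.single_le_sum (fun t _ => hW0 t) hmem
  linarith

end S17

namespace S17

open Finset Relation

section Transport

variable {pr pr' : ℕ → ℕ × ℕ} {f : ℕ → ℕ} {I : Finset ℕ}

lemma tnodes_image (hpr : ∀ j ∈ I, pr (f j) = pr' j) :
    tnodes pr (I.image f) = tnodes pr' I := by
  ext t
  simp only [mem_tnodes]
  constructor
  · rintro ⟨i, hi, hor⟩
    obtain ⟨j, hj, rfl⟩ := Finset.mem_image.1 hi
    rw [hpr j hj] at hor
    exact ⟨j, hj, hor⟩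
  · rintro ⟨j, hj, hor⟩
    exact ⟨f j, Finset.mem_image_of_mem f hj, by rw [hpr j hj]; exact hor⟩

lemma rtg_image (hpr : ∀ j ∈ I, pr (f j) = pr' j) {s t : ℕ}
    (h : ReflTransGen (tstep pr' I) s t) :
    ReflTransGen (tstep pr (I.image f)) s t := by
  refine ReflTransGen.mono ?_ _ _ h
  rintro x y ⟨j, hj, hor⟩
  exact ⟨f j, Finset.mem_image_of_mem f hj, by rw [hpr j hj]; exact hor⟩

lemma tconn_image (hpr : ∀ j ∈ I, pr (f j) = pr' j) (h : tconn pr' I) :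
    tconn pr (I.image f) := by
  intro x hx y hy
  rw [tnodes_image hpr] at hx hy
  exact rtg_image hpr (h x hx y hy)

lemma ATree_image (hf : Set.InjOn f I) (hpr : ∀ j ∈ I, pr (f j) = pr' j) (h : ATree pr' I) :
    ATree pr (I.image f) := by
  refine ⟨h.1.image f, ?_, tconn_image hpr h.2.2⟩
  rw [tnodes_image hpr, Finset.card_image_of_injOn hf]
  exact h.2.1

lemma tval_image (W : ℕ → ℝ) (hpr : ∀ j ∈ I, pr (f j) = pr' j) :
    tval pr W (I.image f) = tval pr' W I := by
  unfold tval; rw [tnodes_image hpr]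

end Transport

lemma tconn_of_hub {pr : ℕ → ℕ × ℕ} {I : Finset ℕ} {z₀ : ℕ}
    (h : ∀ z ∈ tnodes pr I, ReflTransGen (tstep pr I) z z₀) :
    tconn pr I := fun x hx y hy => (h x hx).trans (rtg_symm (h y hy))

lemma ATree_singleton {pr : ℕ → ℕ × ℕ} {i : ℕ} (h : (pr i).1 ≠ (pr i).2) :
    ATree pr {i} := by
  refine ⟨⟨i, Finset.mem_singleton_self i⟩, ?_, ?_⟩
  · rw [tnodes_singleton, Finset.card_singleton]
    rw [Finset.card_insert_of_notMem (by simpa using h), Finset.card_singleton]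
  · have hstep : tstep pr ({i} : Finset ℕ) (pr i).1 (pr i).2 :=
      ⟨i, Finset.mem_singleton_self i, Or.inl rfl⟩
    intro x hx y hy
    rw [tnodes_singleton] at hx hy
    rcases Finset.mem_insert.1 hx with rfl | hx <;>
      rcases Finset.mem_insert.1 hy with h2 | h2 <;>
        first
          | (rw [Finset.mem_singleton] at h2; subst h2)
          | subst h2
    · exact ReflTransGen.refl
    · exact ReflTransGen.single hstep
    · rw [Finset.mem_singleton] at hx; subst hx
      exact ReflTransGen.single (tstep_symm hstep)
    · rw [Finset.mem_singleton] at hx; subst hx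
      exact ReflTransGen.refl

lemma tval_singleton {pr : ℕ → ℕ × ℕ} {W : ℕ → ℝ} {i : ℕ} (h : (pr i).1 ≠ (pr i).2) :
    tval pr W {i} = W (min (pr i).1 (pr i).2) := by
  unfold tval nval
  rw [tnodes_singleton, Finset.sum_pair h]
  have hs : ({(pr i).1, (pr i).2} : Finset ℕ).sup id = max (pr i).1 (pr i).2 := by
    rw [Finset.sup_insert, Finset.sup_singleton]
    rfl
  rw [hs]
  rcases le_total (pr i).1 (pr i).2 with hle | hle
  · rw [max_eq_right hle, min_eq_left hle]; ring
  · rw [max_eq_left hle, min_eq_right hle]; ring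

end S17

namespace S17

open Finset Relation

/-- The key re-materialization step: a tree `I'` of reduced arcs containing the spliced
arc `jstar` is converted to trees of current arcs, gaining value `W μ`. -/
lemma unwind_part
    (pr pr' : ℕ → ℕ × ℕ) (W : ℕ → ℝ) (hW0 : ∀ t, 0 ≤ W t)
    (shift : ℕ → ℕ) (jstar c₁ c₂ μ : ℕ)
    (hc12 : c₁ ≠ c₂)
    (hsh_inj : Function.Injective shift)
    (hsh_ne : ∀ j, j ≠ jstar → shift j ≠ c₁ ∧ shift j ≠ c₂)
    (hpr : ∀ j, j ≠ jstar → pr (shift j) = pr' j)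
    (hc₁fst : (pr c₁).1 = (pr' jstar).1) (hc₁snd : (pr c₁).2 = μ)
    (hc₂fst : (pr c₂).1 = μ) (hc₂snd : (pr c₂).2 = (pr' jstar).2)
    (huμ : (pr' jstar).1 ≠ μ) (hwμ : (pr' jstar).2 ≠ μ)
    (I' : Finset ℕ) (hT : ATree pr' I') (hjin : jstar ∈ I')
    (hμle : ∀ t ∈ tnodes pr' I', μ ≤ t) :
    ∃ out : List (Finset ℕ),
      List.Pairwise Disjoint out ∧
      (∀ P ∈ out, ATree pr P ∧ P ⊆ insert c₁ (insert c₂ ((I'.erase jstar).image shift))) ∧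
      tval pr' W I' + W μ ≤ (out.map (tval pr W)).sum := by
  classical
  set u := (pr' jstar).1 with hu
  set w := (pr' jstar).2 with hw
  set A := (I'.erase jstar).image shift with hAdef
  have hpre : ∀ j ∈ I'.erase jstar, pr (shift j) = pr' j :=
    fun j hj => hpr j (Finset.ne_of_mem_erase hj)
  have htnA : tnodes pr A = tnodes pr' (I'.erase jstar) := tnodes_image hpre
  have htnAsub : tnodes pr A ⊆ tnodes pr' I' := by
    rw [htnA]; exact tnodes_mono (Finset.erase_subset _ _)
  have humem : u ∈ tnodes pr' I' := fst_mem_tnodes hjin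
  have hwmem : w ∈ tnodes pr' I' := snd_mem_tnodes hjin
  have hcard_tn : (tnodes pr' I').card = I'.card + 1 := hT.2.1
  have hIpos : 1 ≤ I'.card := Finset.card_pos.2 hT.1
  have hcardA : A.card = I'.card - 1 := by
    rw [hAdef, Finset.card_image_of_injOn hsh_inj.injOn]
    exact Finset.card_erase_of_mem hjin
  have hc₁A : c₁ ∉ A := by
    rw [hAdef]; intro hc
    obtain ⟨j, hj, hje⟩ := Finset.mem_image.1 hc
    exact (hsh_ne j (Finset.ne_of_mem_erase hj)).1 hje
  have hc₂A : c₂ ∉ A := by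
    rw [hAdef]; intro hc
    obtain ⟨j, hj, hje⟩ := Finset.mem_image.1 hc
    exact (hsh_ne j (Finset.ne_of_mem_erase hj)).2 hje
  have hdecomp : ∀ z ∈ tnodes pr' I',
      ReflTransGen (tstep pr A) z u ∨ ReflTransGen (tstep pr A) z w := by
    intro z hz
    have h1 : ReflTransGen (tstep pr' I') z u := hT.2.2 z hz u humem
    rcases reach_decomp jstar h1 with h | ⟨h1', _⟩ | ⟨h1', _⟩
    · exact Or.inl (rtg_image hpre h)
    · exact Or.inl (rtg_image hpre h1')
    · exact Or.inr (rtg_image hpre h1')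
  have hprc₁ : pr c₁ = (u, μ) := Prod.ext_iff.2 ⟨hc₁fst, hc₁snd⟩
  have hprc₂ : pr c₂ = (μ, w) := Prod.ext_iff.2 ⟨hc₂fst, hc₂snd⟩
  have hc₁ne : (pr c₁).1 ≠ (pr c₁).2 := by rw [hc₁fst, hc₁snd]; exact huμ
  have hc₂ne : (pr c₂).1 ≠ (pr c₂).2 := by
    rw [hc₂fst, hc₂snd]; exact fun h => hwμ h.symm
  by_cases hfresh : μ ∈ tnodes pr' I'
  · -- μ is already a node of the reduced tree
    have hμA : μ ∈ tnodes pr A := by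
      rw [htnA]
      obtain ⟨j, hj, hor⟩ := mem_tnodes.1 hfresh
      have hjne : j ≠ jstar := by
        rintro rfl
        rcases hor with h | h
        · exact huμ h
        · exact hwμ h
      exact mem_tnodes.2 ⟨j, Finset.mem_erase.2 ⟨hjne, hj⟩, hor⟩
    rcases hdecomp μ hfresh with hμu | hμw
    · -- case (i): μ connects to u within A;  T := insert c₂ A, drop c₁
      have huA : u ∈ tnodes pr A := rtg_mem_tnodes hμu (fun h => huμ h.symm)
      set T := insert c₂ A with hTdef
      have hc₁T : c₁ ∉ T := by
        rw [hTdef]; intro hc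
        rcases Finset.mem_insert.1 hc with h | h
        · exact hc12 h
        · exact hc₁A h
      have htnT : tnodes pr T = tnodes pr' I' := by
        apply Finset.Subset.antisymm
        · intro t ht
          obtain ⟨e, he, hor⟩ := mem_tnodes.1 ht
          rcases Finset.mem_insert.1 he with rfl | he
          · rcases hor with h | h
            · rw [hc₂fst] at h; exact h ▸ hfresh
            · rw [hc₂snd] at h; exact h ▸ hwmem
          · exact htnAsub (mem_tnodes.2 ⟨e, he, hor⟩)
        · intro t ht
          obtain ⟨j, hj, hor⟩ := mem_tnodes.1 ht
          by_cases hj' : j = jstar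
          · subst hj'
            rcases hor with h | h
            · exact tnodes_mono (Finset.subset_insert _ _) (h ▸ huA)
            · exact mem_tnodes.2 ⟨c₂, Finset.mem_insert_self _ _, Or.inr (by rw [hc₂snd]; exact h)⟩
          · have hmem : t ∈ tnodes pr A := by
              rw [htnA]
              exact mem_tnodes.2 ⟨j, Finset.mem_erase.2 ⟨hj', hj⟩, hor⟩
            exact tnodes_mono (Finset.subset_insert _ _) hmem
      have hstep_wμ : tstep pr T w μ :=
        ⟨c₂, Finset.mem_insert_self _ _, Or.inr hprc₂⟩
      have hAT : A ⊆ T := Finset.subset_insert _ _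
      have hconnT : tconn pr T := by
        apply tconn_of_hub (z₀ := u)
        intro z hz
        rw [htnT] at hz
        rcases hdecomp z hz with h | h
        · exact rtg_mono hAT h
        · exact ((rtg_mono hAT h).tail hstep_wμ).trans (rtg_mono hAT hμu)
      have hATree : ATree pr T := by
        refine ⟨⟨c₂, Finset.mem_insert_self _ _⟩, ?_, hconnT⟩
        rw [htnT, hcard_tn, hTdef, Finset.card_insert_of_notMem hc₂A, hcardA]
        omega
      have htvT : tval pr W T = tval pr' W I' := by unfold tval; rw [htnT]
      have hμltu : μ < u := lt_of_le_of_ne (hμle u humem) (fun h => huμ h.symm)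
      have htv₁ : tval pr W {c₁} = W μ := by
        rw [tval_singleton hc₁ne, hc₁fst, hc₁snd]
        rw [min_eq_right (le_of_lt hμltu)]
      refine ⟨[T, {c₁}], ?_, ?_, ?_⟩
      · refine List.pairwise_cons.2 ⟨?_, List.pairwise_singleton _ _⟩
        intro P hP
        rw [List.mem_singleton] at hP; subst hP
        exact Finset.disjoint_singleton_right.2 hc₁T
      · intro P hP
        rcases List.mem_cons.1 hP with rfl | hP
        · refine ⟨hATree, ?_⟩
          rw [hTdef]
          intro x hx
          rcases Finset.mem_insert.1 hx with rfl | hx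
          · exact Finset.mem_insert_of_mem (Finset.mem_insert_self _ _)
          · exact Finset.mem_insert_of_mem (Finset.mem_insert_of_mem hx)
        · rw [List.mem_singleton] at hP; subst hP
          refine ⟨ATree_singleton hc₁ne, ?_⟩
          intro x hx
          rw [Finset.mem_singleton] at hx; subst hx
          exact Finset.mem_insert_self _ _
      · simp only [List.map_cons, List.map_nil, List.sum_cons, List.sum_nil]
        rw [htvT, htv₁]; linarith
    · -- case (ii): μ connects to w within A;  T := insert c₁ A, drop c₂
      have hwA : w ∈ tnodes pr A := rtg_mem_tnodes hμw (fun h => hwμ h.symm)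
      set T := insert c₁ A with hTdef
      have hc₂T : c₂ ∉ T := by
        rw [hTdef]; intro hc
        rcases Finset.mem_insert.1 hc with h | h
        · exact hc12 h.symm
        · exact hc₂A h
      have htnT : tnodes pr T = tnodes pr' I' := by
        apply Finset.Subset.antisymm
        · intro t ht
          obtain ⟨e, he, hor⟩ := mem_tnodes.1 ht
          rcases Finset.mem_insert.1 he with rfl | he
          · rcases hor with h | h
            · rw [hc₁fst] at h; exact h ▸ humem
            · rw [hc₁snd] at h; exact h ▸ hfresh
          · exact htnAsub (mem_tnodes.2 ⟨e, he, hor⟩)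
        · intro t ht
          obtain ⟨j, hj, hor⟩ := mem_tnodes.1 ht
          by_cases hj' : j = jstar
          · subst hj'
            rcases hor with h | h
            · exact mem_tnodes.2 ⟨c₁, Finset.mem_insert_self _ _, Or.inl (by rw [hc₁fst]; exact h)⟩
            · exact tnodes_mono (Finset.subset_insert _ _) (h ▸ hwA)
          · have hmem : t ∈ tnodes pr A := by
              rw [htnA]
              exact mem_tnodes.2 ⟨j, Finset.mem_erase.2 ⟨hj', hj⟩, hor⟩
            exact tnodes_mono (Finset.subset_insert _ _) hmem
      have hstep_uμ : tstep pr T u μ :=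
        ⟨c₁, Finset.mem_insert_self _ _, Or.inl hprc₁⟩
      have hAT : A ⊆ T := Finset.subset_insert _ _
      have hconnT : tconn pr T := by
        apply tconn_of_hub (z₀ := w)
        intro z hz
        rw [htnT] at hz
        rcases hdecomp z hz with h | h
        · exact ((rtg_mono hAT h).tail hstep_uμ).trans (rtg_mono hAT hμw)
        · exact rtg_mono hAT h
      have hATree : ATree pr T := by
        refine ⟨⟨c₁, Finset.mem_insert_self _ _⟩, ?_, hconnT⟩
        rw [htnT, hcard_tn, hTdef, Finset.card_insert_of_notMem hc₁A, hcardA]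
        omega
      have htvT : tval pr W T = tval pr' W I' := by unfold tval; rw [htnT]
      have hμltw : μ < w := lt_of_le_of_ne (hμle w hwmem) (fun h => hwμ h.symm)
      have htv₂ : tval pr W {c₂} = W μ := by
        rw [tval_singleton hc₂ne, hc₂fst, hc₂snd]
        rw [min_eq_left (le_of_lt hμltw)]
      refine ⟨[T, {c₂}], ?_, ?_, ?_⟩
      · refine List.pairwise_cons.2 ⟨?_, List.pairwise_singleton _ _⟩
        intro P hP
        rw [List.mem_singleton] at hP; subst hP
        exact Finset.disjoint_singleton_right.2 hc₂T
      · intro P hP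
        rcases List.mem_cons.1 hP with rfl | hP
        · refine ⟨hATree, ?_⟩
          rw [hTdef]
          intro x hx
          rcases Finset.mem_insert.1 hx with rfl | hx
          · exact Finset.mem_insert_self _ _
          · exact Finset.mem_insert_of_mem (Finset.mem_insert_of_mem hx)
        · rw [List.mem_singleton] at hP; subst hP
          refine ⟨ATree_singleton hc₂ne, ?_⟩
          intro x hx
          rw [Finset.mem_singleton] at hx; subst hx
          exact Finset.mem_insert_of_mem (Finset.mem_insert_self _ _)
      · simp only [List.map_cons, List.map_nil, List.sum_cons, List.sum_nil]
        rw [htvT, htv₂]; linarith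
  · -- μ is a fresh node:  T := insert c₁ (insert c₂ A), no drop
    set T := insert c₁ (insert c₂ A) with hTdef
    have htnT : tnodes pr T = insert μ (tnodes pr' I') := by
      apply Finset.Subset.antisymm
      · intro t ht
        obtain ⟨e, he, hor⟩ := mem_tnodes.1 ht
        rcases Finset.mem_insert.1 he with rfl | he
        · rcases hor with h | h
          · rw [hc₁fst] at h; exact Finset.mem_insert_of_mem (h ▸ humem)
          · rw [hc₁snd] at h; exact h ▸ Finset.mem_insert_self _ _
        rcases Finset.mem_insert.1 he with rfl | he
        · rcases hor with h | h
          · rw [hc₂fst] at h; exact h ▸ Finset.mem_insert_self _ _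
          · rw [hc₂snd] at h; exact Finset.mem_insert_of_mem (h ▸ hwmem)
        · exact Finset.mem_insert_of_mem (htnAsub (mem_tnodes.2 ⟨e, he, hor⟩))
      · intro t ht
        rcases Finset.mem_insert.1 ht with rfl | ht
        · exact mem_tnodes.2 ⟨c₁, Finset.mem_insert_self _ _, Or.inr hc₁snd⟩
        obtain ⟨j, hj, hor⟩ := mem_tnodes.1 ht
        by_cases hj' : j = jstar
        · subst hj'
          rcases hor with h | h
          · exact mem_tnodes.2 ⟨c₁, Finset.mem_insert_self _ _, Or.inl (by rw [hc₁fst]; exact h)⟩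
          · exact mem_tnodes.2 ⟨c₂, Finset.mem_insert_of_mem (Finset.mem_insert_self _ _),
              Or.inr (by rw [hc₂snd]; exact h)⟩
        · have hmem : t ∈ tnodes pr A := by
            rw [htnA]
            exact mem_tnodes.2 ⟨j, Finset.mem_erase.2 ⟨hj', hj⟩, hor⟩
          exact tnodes_mono (fun x hx => Finset.mem_insert_of_mem (Finset.mem_insert_of_mem hx)) hmem
    have hc₁T : c₁ ∈ T := Finset.mem_insert_self _ _
    have hc₂T : c₂ ∈ T := Finset.mem_insert_of_mem (Finset.mem_insert_self _ _)
    have hAT : A ⊆ T := fun x hx => Finset.mem_insert_of_mem (Finset.mem_insert_of_mem hx)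
    have hstep_uμ : tstep pr T u μ := ⟨c₁, hc₁T, Or.inl hprc₁⟩
    have hstep_wμ : tstep pr T w μ := ⟨c₂, hc₂T, Or.inr hprc₂⟩
    have hconnT : tconn pr T := by
      apply tconn_of_hub (z₀ := μ)
      intro z hz
      rw [htnT] at hz
      rcases Finset.mem_insert.1 hz with rfl | hz
      · exact ReflTransGen.refl
      rcases hdecomp z hz with h | h
      · exact (rtg_mono hAT h).tail hstep_uμ
      · exact (rtg_mono hAT h).tail hstep_wμ
    have hATree : ATree pr T := by
      refine ⟨⟨c₁, hc₁T⟩, ?_, hconnT⟩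
      rw [htnT, Finset.card_insert_of_notMem hfresh, hcard_tn, hTdef,
        Finset.card_insert_of_notMem (by
          intro hc
          rcases Finset.mem_insert.1 hc with h | h
          · exact hc12 h
          · exact hc₁A h),
        Finset.card_insert_of_notMem hc₂A, hcardA]
      omega
    have htvT : tval pr' W I' + W μ = tval pr W T := by
      unfold tval nval
      rw [htnT, Finset.sum_insert hfresh]
      have hsup : (insert μ (tnodes pr' I')).sup id = (tnodes pr' I').sup id := by
        rw [Finset.sup_insert]
        have : μ ≤ (tnodes pr' I').sup id :=
          le_trans (hμle u humem) (Finset.le_sup (f := id) humem)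
        exact sup_eq_right.2 this
      rw [hsup]; ring
    refine ⟨[T], List.pairwise_singleton _ _, ?_, ?_⟩
    · intro P hP
      rw [List.mem_singleton] at hP; subst hP
      exact ⟨hATree, by rw [hTdef]⟩
    · simp only [List.map_cons, List.map_nil, List.sum_cons, List.sum_nil]
      rw [htvT]; linarith

end S17

namespace S17

open Finset Relation

theorem abs_main (W : ℕ → ℝ) (hW0 : ∀ t, 0 ≤ W t) :
    ∀ m : ℕ, 2 ≤ m → ∀ v : ℕ → ℕ,
    v m = v 0 →
    (∀ p, 0 < p → p < m → v p < v 0) →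
    (∀ p, p < m → v p ≠ v (p + 1)) →
    (∀ p q, 0 < p → p < q → q < m → v p = v q → ∃ r, p < r ∧ r < q ∧ v p < v r) →
    ∃ parts : List (Finset ℕ),
      List.Pairwise Disjoint parts ∧
      (∀ I ∈ parts, ATree (fun i => (v i, v (i + 1))) I ∧ I ⊆ Finset.range m) ∧
      ∑ p ∈ Finset.Ioo 0 m, W (v p) ≤ (parts.map (tval (fun i => (v i, v (i + 1))) W)).sum := by
  intro m
  induction m using Nat.strong_induction_on with
  | _ m IH =>
  intro hm v hcyc hroot hne hrul
  by_cases hm2 : m = 2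
  · subst hm2
    have hne0 : v 0 ≠ v 1 := hne 0 (by norm_num)
    refine ⟨[{0}], List.pairwise_singleton _ _, ?_, ?_⟩
    · intro I hI
      rw [List.mem_singleton] at hI; subst hI
      refine ⟨ATree_singleton hne0, ?_⟩
      intro x hx; rw [Finset.mem_singleton] at hx; subst hx
      simp
    · have hIoo : Finset.Ioo 0 2 = {1} := rfl
      rw [hIoo]
      simp only [Finset.sum_singleton, List.map_cons, List.map_nil, List.sum_cons, List.sum_nil]
      rw [tval_singleton hne0]
      have h1 : v 1 < v 0 := hroot 1 one_pos one_lt_two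
      have : min ((fun i => (v i, v (i + 1))) 0).1 ((fun i => (v i, v (i + 1))) 0).2 = v 1 := by
        simp only
        exact min_eq_right (le_of_lt h1)
      rw [this]
      linarith
  -- inductive step
  have hm3 : 3 ≤ m := by omega
  have hIoo_ne : (Finset.Ioo 0 m).Nonempty := ⟨1, Finset.mem_Ioo.2 ⟨one_pos, by omega⟩⟩
  have hSne : ((Finset.Ioo 0 m).image v).Nonempty := hIoo_ne.image v
  set μ := ((Finset.Ioo 0 m).image v).min' hSne with hμdef
  obtain ⟨q, hqmem, hqv⟩ := Finset.mem_image.1 (Finset.min'_mem _ hSne)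
  rw [← hμdef] at hqv
  have hq0 : 0 < q := (Finset.mem_Ioo.1 hqmem).1
  have hqm : q < m := (Finset.mem_Ioo.1 hqmem).2
  have hμmin : ∀ p, 0 < p → p < m → μ ≤ v p := fun p h1 h2 =>
    Finset.min'_le _ _ (Finset.mem_image_of_mem v (Finset.mem_Ioo.2 ⟨h1, h2⟩))
  have hμ0 : μ < v 0 := by rw [← hqv]; exact hroot q hq0 hqm
  have hμall : ∀ p, p ≤ m → μ ≤ v p := by
    intro p hp
    rcases Nat.eq_zero_or_pos p with rfl | h0
    · exact le_of_lt hμ0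
    rcases eq_or_lt_of_le hp with rfl | hpm
    · rw [hcyc]; exact le_of_lt hμ0
    · exact hμmin p h0 hpm
  set m' := m - 1 with hm'def
  set v' := fun j => if j < q then v j else v (j + 1) with hv'def
  have hv'0 : v' 0 = v 0 := by simp [hv'def, hq0]
  have hv'm : v' m' = v 0 := by
    have h1 : ¬ m' < q := by omega
    simp only [hv'def, if_neg h1]
    rw [show m' + 1 = m by omega, hcyc]
  have hv'q : ∀ j, q ≤ j → v' j = v (j + 1) := by
    intro j hj; simp [hv'def, Nat.not_lt.2 hj]
  have hv'lt : ∀ j, j < q → v' j = v j := by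
    intro j hj; simp [hv'def, hj]
  -- flank lemma
  have hflank : v (q - 1) ≠ v (q + 1) := by
    intro heq
    rcases Nat.lt_or_ge (q + 1) m with h2 | h2
    · rcases Nat.eq_zero_or_pos (q - 1) with h1 | h1
      · have hvlt : v (q + 1) < v 0 := hroot (q + 1) (by omega) h2
        rw [h1] at heq
        rw [← heq] at hvlt
        exact lt_irrefl _ hvlt
      · obtain ⟨r, hr1, hr2, hr3⟩ := hrul (q - 1) (q + 1) h1 (by omega) h2 heq
        have hrq : r = q := by omega
        rw [hrq, hqv] at hr3
        have hle : μ ≤ v (q - 1) := hμmin _ h1 (by omega)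
        omega
    · have hq1m : q + 1 = m := by omega
      have h1 : 0 < q - 1 := by omega
      have hvlt : v (q - 1) < v 0 := hroot (q - 1) h1 (by omega)
      rw [heq, hq1m, hcyc] at hvlt
      exact lt_irrefl _ hvlt
  have hqflank1 : v (q - 1) ≠ μ := by
    rw [← hqv]
    have := hne (q - 1) (by omega)
    rw [show q - 1 + 1 = q by omega] at this
    exact this
  have hqflank2 : v (q + 1) ≠ μ := by
    rw [← hqv]
    exact fun h => hne q hqm h.symm
  -- reduced hypotheses
  have hcyc' : v' m' = v' 0 := by rw [hv'm, hv'0]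
  have hroot' : ∀ p, 0 < p → p < m' → v' p < v' 0 := by
    intro p h0 hpm
    rw [hv'0]
    by_cases h : p < q
    · rw [hv'lt p h]; exact hroot p h0 (by omega)
    · rw [hv'q p (by omega)]; exact hroot (p + 1) (by omega) (by omega)
  have hne' : ∀ p, p < m' → v' p ≠ v' (p + 1) := by
    intro p hp
    by_cases h1 : p + 1 < q
    · rw [hv'lt p (by omega), hv'lt (p + 1) h1]
      exact hne p (by omega)
    by_cases h2 : p + 1 = q
    · rw [hv'lt p (by omega), hv'q (p + 1) (by omega)]
      have hp' : p = q - 1 := by omega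
      rw [hp', show q - 1 + 1 + 1 = q + 1 by omega]
      exact hflank
    · rw [hv'q p (by omega), hv'q (p + 1) (by omega)]
      exact hne (p + 1) (by omega)
  have hrul' : ∀ p r, 0 < p → p < r → r < m' → v' p = v' r →
      ∃ s, p < s ∧ s < r ∧ v' p < v' s := by
    intro p r h0 hpr hrm heq
    set ph := if p < q then p else p + 1 with hphdef
    set rh := if r < q then r else r + 1 with hrhdef
    have hvp : v ph = v' p := by
      by_cases h : p < q
      · rw [hphdef, if_pos h, hv'lt p h]
      · rw [hphdef, if_neg h, hv'q p (by omega)]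
    have hvr : v rh = v' r := by
      by_cases h : r < q
      · rw [hrhdef, if_pos h, hv'lt r h]
      · rw [hrhdef, if_neg h, hv'q r (by omega)]
    have hph0 : 0 < ph := by rw [hphdef]; split <;> omega
    have hphrh : ph < rh := by rw [hphdef, hrhdef]; split <;> split <;> omega
    have hrhm : rh < m := by rw [hrhdef]; split <;> omega
    obtain ⟨s, hs1, hs2, hs3⟩ := hrul ph rh hph0 hphrh hrhm (by rw [hvp, hvr, heq])
    have hsq : s ≠ q := by
      intro h; subst h
      have h4 : μ ≤ v ph := hμmin ph hph0 (by omega)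
      rw [hqv] at hs3
      omega
    refine ⟨if s < q then s else s - 1, ?_, ?_, ?_⟩
    · rw [hphdef] at hs1
      by_cases h : s < q
      · rw [if_pos h]
        by_cases h' : p < q
        · rw [if_pos h'] at hs1; exact hs1
        · rw [if_neg h'] at hs1; omega
      · rw [if_neg h]
        by_cases h' : p < q
        · rw [if_pos h'] at hs1; omega
        · rw [if_neg h'] at hs1; omega
    · rw [hrhdef] at hs2
      by_cases h : s < q
      · rw [if_pos h]
        by_cases h' : r < q
        · rw [if_pos h'] at hs2; exact hs2
        · rw [if_neg h'] at hs2; omega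
      · rw [if_neg h]
        by_cases h' : r < q
        · rw [if_pos h'] at hs2; omega
        · rw [if_neg h'] at hs2; omega
    · have hvs : v' (if s < q then s else s - 1) = v s := by
        by_cases h : s < q
        · rw [if_pos h, hv'lt s h]
        · rw [if_neg h, hv'q (s - 1) (by omega), show s - 1 + 1 = s by omega]
      rw [hvs, ← hvp]
      exact hs3
  -- apply induction hypothesis
  obtain ⟨parts', hdisj', hparts', hsum'⟩ :=
    IH m' (by omega) (by omega) v' hcyc' hroot' hne' hrul'
  -- setup for the unwind
  have hsh_inj : Function.Injective (fun j => if j < q - 1 then j else j + 1) := by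
    intro a b hab
    simp only at hab
    split_ifs at hab <;> omega
  have hsh_ne : ∀ j, j ≠ q - 1 →
      (fun j => if j < q - 1 then j else j + 1) j ≠ q - 1 ∧
      (fun j => if j < q - 1 then j else j + 1) j ≠ q := by
    intro j hj
    simp only
    split_ifs with h
    · exact ⟨by omega, by omega⟩
    · exact ⟨by omega, by omega⟩
  have hpr_compat : ∀ j, j ≠ q - 1 →
      (fun i => (v i, v (i + 1))) ((fun j => if j < q - 1 then j else j + 1) j)
        = (fun j => (v' j, v' (j + 1))) j := by
    intro j hj
    by_cases h : j < q - 1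
    · simp only [if_pos h]
      rw [hv'lt j (by omega), hv'lt (j + 1) (by omega)]
    · simp only [if_neg h]
      rw [hv'q j (by omega), hv'q (j + 1) (by omega)]
  have hshift_lt : ∀ j, j < m' → (if j < q - 1 then j else j + 1) < m := by
    intro j hj; split <;> omega
  -- the domain map, for disjointness across parts
  set Dom := fun I : Finset ℕ => if q - 1 ∈ I
      then insert (q - 1) (insert q ((I.erase (q - 1)).image (fun j => if j < q - 1 then j else j + 1)))
      else I.image (fun j => if j < q - 1 then j else j + 1) with hDomdef
  have hmem_dom : ∀ (I : Finset ℕ) x, x ∈ Dom I →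
      (x = q - 1 ∧ q - 1 ∈ I) ∨ (x = q ∧ q - 1 ∈ I) ∨
      ∃ j ∈ I, j ≠ q - 1 ∧ x = (if j < q - 1 then j else j + 1) := by
    intro I x hx
    simp only [hDomdef] at hx
    by_cases h : q - 1 ∈ I
    · rw [if_pos h] at hx
      rcases Finset.mem_insert.1 hx with rfl | hx
      · exact Or.inl ⟨rfl, h⟩
      rcases Finset.mem_insert.1 hx with rfl | hx
      · exact Or.inr (Or.inl ⟨rfl, h⟩)
      · obtain ⟨j, hj, rfl⟩ := Finset.mem_image.1 hx
        exact Or.inr (Or.inr ⟨j, Finset.mem_of_mem_erase hj, Finset.ne_of_mem_erase hj, rfl⟩)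
    · rw [if_neg h] at hx
      obtain ⟨j, hj, rfl⟩ := Finset.mem_image.1 hx
      exact Or.inr (Or.inr ⟨j, hj, fun hq' => h (hq' ▸ hj), rfl⟩)
  have hDom_disj : ∀ I J : Finset ℕ, Disjoint I J → Disjoint (Dom I) (Dom J) := by
    intro I J hIJ
    rw [Finset.disjoint_left]
    intro x hxI hxJ
    rcases hmem_dom I x hxI with ⟨hx1, hI1⟩ | ⟨hx1, hI1⟩ | ⟨j, hj, hjne, hjx⟩ <;>
      rcases hmem_dom J x hxJ with ⟨hx2, hJ2⟩ | ⟨hx2, hJ2⟩ | ⟨k, hk, hkne, hkx⟩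
    · exact (Finset.disjoint_left.1 hIJ) hI1 hJ2
    · omega
    · rw [hx1] at hkx; revert hkx; split <;> omega
    · omega
    · exact (Finset.disjoint_left.1 hIJ) hI1 hJ2
    · rw [hx1] at hkx; revert hkx; split <;> omega
    · rw [hx2] at hjx; revert hjx; split <;> omega
    · rw [hx2] at hjx; revert hjx; split <;> omega
    · have hjk : j = k := by
        apply hsh_inj
        show (if j < q - 1 then j else j + 1) = (if k < q - 1 then k else k + 1)
        rw [← hjx, ← hkx]
      subst hjk
      exact (Finset.disjoint_left.1 hIJ) hj hk
  have hDom_range : ∀ I : Finset ℕ, I ⊆ Finset.range m' → Dom I ⊆ Finset.range m := by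
    intro I hI x hx
    rcases hmem_dom I x hx with ⟨rfl, _⟩ | ⟨rfl, _⟩ | ⟨j, hj, _, hjx⟩
    · exact Finset.mem_range.2 (by omega)
    · exact Finset.mem_range.2 (by omega)
    · have := Finset.mem_range.1 (hI hj)
      rw [hjx]
      exact Finset.mem_range.2 (hshift_lt j this)
  -- per-part transformation over the list of reduced parts
  have hmain : ∀ L : List (Finset ℕ), List.Pairwise Disjoint L →
      (∀ I ∈ L, ATree (fun j => (v' j, v' (j + 1))) I ∧ I ⊆ Finset.range m') →
      ∃ parts : List (Finset ℕ), List.Pairwise Disjoint parts ∧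
        (∀ P ∈ parts, ATree (fun i => (v i, v (i + 1))) P ∧ ∃ I ∈ L, P ⊆ Dom I) ∧
        (L.map (tval (fun j => (v' j, v' (j + 1))) W)).sum
          + (if ∃ I ∈ L, q - 1 ∈ I then W μ else 0)
          ≤ (parts.map (tval (fun i => (v i, v (i + 1))) W)).sum := by
    intro L
    induction L with
    | nil =>
      intro _ _
      refine ⟨[], List.Pairwise.nil, by simp, ?_⟩
      simp
    | cons I L ihL =>
      intro hdisjL hmemL
      obtain ⟨partsL, hdL, hmL, hsL⟩ := ihL (List.pairwise_cons.1 hdisjL).2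
        (fun J hJ => hmemL J (List.mem_cons_of_mem _ hJ))
      have hI := hmemL I (List.mem_cons_self)
      have hhead : ∀ J ∈ L, Disjoint I J := (List.pairwise_cons.1 hdisjL).1
      by_cases hjq : q - 1 ∈ I
      · -- this part contains the spliced arc: unwind it
        have hLfalse : ¬ ∃ J ∈ L, q - 1 ∈ J := by
          rintro ⟨J, hJ, hq'⟩
          exact (Finset.disjoint_left.1 (hhead J hJ)) hjq hq'
        have hμle' : ∀ t ∈ tnodes (fun j => (v' j, v' (j + 1))) I, μ ≤ t := by
          intro t ht
          obtain ⟨j, hj, hor⟩ := mem_tnodes.1 ht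
          have hjm : j < m' := Finset.mem_range.1 (hI.2 hj)
          have hv'ge : ∀ k, k ≤ m' → μ ≤ v' k := by
            intro k hk
            by_cases h : k < q
            · rw [hv'lt k h]; exact hμall k (by omega)
            · rw [hv'q k (by omega)]; exact hμall (k + 1) (by omega)
          rcases hor with h | h
          · rw [← h]; exact hv'ge j (by omega)
          · rw [← h]; exact hv'ge (j + 1) (by omega)
        obtain ⟨out, hod, hom, hos⟩ := unwind_part
          (fun i => (v i, v (i + 1))) (fun j => (v' j, v' (j + 1))) W hW0
          (fun j => if j < q - 1 then j else j + 1) (q - 1) (q - 1) q μ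
          (by omega) hsh_inj hsh_ne hpr_compat
          (by show v (q - 1) = v' (q - 1); rw [hv'lt (q - 1) (by omega)])
          (by show v (q - 1 + 1) = μ; rw [show q - 1 + 1 = q by omega]; exact hqv)
          (by show v q = μ; exact hqv)
          (by show v (q + 1) = v' (q - 1 + 1); rw [show q - 1 + 1 = q by omega, hv'q q (le_refl q)])
          (by show v' (q - 1) ≠ μ; rw [hv'lt (q - 1) (by omega)]; exact hqflank1)
          (by show v' (q - 1 + 1) ≠ μ; rw [show q - 1 + 1 = q by omega, hv'q q (le_refl q)]; exact hqflank2)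
          I hI.1 hjq hμle'
        refine ⟨out ++ partsL, ?_, ?_, ?_⟩
        · rw [List.pairwise_append]
          refine ⟨hod, hdL, ?_⟩
          intro P hP Q hQ
          obtain ⟨_, hPsub⟩ := hom P hP
          obtain ⟨_, J, hJ, hQsub⟩ := hmL Q hQ
          have hPD : P ⊆ Dom I := by
            simp only [hDomdef]; rw [if_pos hjq]; exact hPsub
          exact Finset.disjoint_of_subset_left hPD
            (Finset.disjoint_of_subset_right hQsub (hDom_disj I J (hhead J hJ)))
        · intro P hP
          rcases List.mem_append.1 hP with hP | hP
          · obtain ⟨hA, hPsub⟩ := hom P hP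
            refine ⟨hA, I, List.mem_cons_self, ?_⟩
            simp only [hDomdef]; rw [if_pos hjq]; exact hPsub
          · obtain ⟨hA, J, hJ, hQsub⟩ := hmL P hP
            exact ⟨hA, J, List.mem_cons_of_mem _ hJ, hQsub⟩
        · rw [List.map_cons, List.sum_cons, List.map_append, List.sum_append]
          rw [if_pos (⟨I, List.mem_cons_self, hjq⟩ : ∃ J ∈ I :: L, q - 1 ∈ J)]
          rw [if_neg hLfalse] at hsL
          linarith
      · -- this part is untouched: just re-index
        have hcompatI : ∀ j ∈ I, (fun i => (v i, v (i + 1))) ((fun j => if j < q - 1 then j else j + 1) j)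
            = (fun j => (v' j, v' (j + 1))) j :=
          fun j hj => hpr_compat j (fun h => hjq (h ▸ hj))
        refine ⟨(I.image (fun j => if j < q - 1 then j else j + 1)) :: partsL, ?_, ?_, ?_⟩
        · rw [List.pairwise_cons]
          refine ⟨?_, hdL⟩
          intro Q hQ
          obtain ⟨_, J, hJ, hQsub⟩ := hmL Q hQ
          have hPD : (I.image (fun j => if j < q - 1 then j else j + 1)) ⊆ Dom I := by
            simp only [hDomdef]; rw [if_neg hjq]
          exact Finset.disjoint_of_subset_left hPD
            (Finset.disjoint_of_subset_right hQsub (hDom_disj I J (hhead J hJ)))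
        · intro P hP
          rcases List.mem_cons.1 hP with rfl | hP
          · refine ⟨ATree_image hsh_inj.injOn hcompatI hI.1, I, List.mem_cons_self, ?_⟩
            simp only [hDomdef]; rw [if_neg hjq]
          · obtain ⟨hA, J, hJ, hQsub⟩ := hmL P hP
            exact ⟨hA, J, List.mem_cons_of_mem _ hJ, hQsub⟩
        · rw [List.map_cons, List.sum_cons, List.map_cons, List.sum_cons]
          rw [tval_image W hcompatI]
          have hiteeq : (if ∃ J ∈ I :: L, q - 1 ∈ J then W μ else 0)
              = (if ∃ J ∈ L, q - 1 ∈ J then W μ else 0) := by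
            apply if_congr _ rfl rfl
            constructor
            · rintro ⟨J, hJ, hq'⟩
              rcases List.mem_cons.1 hJ with rfl | hJ
              · exact absurd hq' hjq
              · exact ⟨J, hJ, hq'⟩
            · rintro ⟨J, hJ, hq'⟩
              exact ⟨J, List.mem_cons_of_mem _ hJ, hq'⟩
          rw [hiteeq]
          linarith
  obtain ⟨partsM, hMd, hMm, hMs⟩ := hmain parts' hdisj' hparts'
  -- sum re-indexing
  have hlift_inj : ∀ a ∈ Finset.Ioo 0 m', ∀ b ∈ Finset.Ioo 0 m',
      (fun p => if p < q then p else p + 1) a = (fun p => if p < q then p else p + 1) b → a = b := by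
    intro a _ b _ hab
    simp only at hab
    split_ifs at hab <;> omega
  have himg : (Finset.Ioo 0 m').image (fun p => if p < q then p else p + 1)
      = (Finset.Ioo 0 m).erase q := by
    ext x
    simp only [Finset.mem_image, Finset.mem_erase, Finset.mem_Ioo]
    constructor
    · rintro ⟨p, ⟨h0, hm'⟩, rfl⟩
      split_ifs with h
      · exact ⟨by omega, by omega, by omega⟩
      · exact ⟨by omega, by omega, by omega⟩
    · rintro ⟨hxq, h0, hxm⟩
      by_cases h : x < q
      · exact ⟨x, ⟨h0, by omega⟩, if_pos h⟩
      · refine ⟨x - 1, ⟨by omega, by omega⟩, ?_⟩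
        rw [if_neg (by omega)]
        omega
  have hsum_img : ∑ p ∈ (Finset.Ioo 0 m).erase q, W (v p)
      = ∑ p ∈ Finset.Ioo 0 m', W (v' p) := by
    rw [← himg, Finset.sum_image hlift_inj]
    apply Finset.sum_congr rfl
    intro p hp
    by_cases h : p < q
    · rw [if_pos h, hv'lt p h]
    · rw [if_neg h, hv'q p (by omega)]
  have hreindex : ∑ p ∈ Finset.Ioo 0 m, W (v p)
      = (∑ p ∈ Finset.Ioo 0 m', W (v' p)) + W μ := by
    rw [← hsum_img, ← hqv, Finset.sum_erase_add _ _ hqmem]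
  by_cases hex : ∃ I ∈ parts', q - 1 ∈ I
  · refine ⟨partsM, hMd, ?_, ?_⟩
    · intro P hP
      obtain ⟨hA, J, hJ, hPD⟩ := hMm P hP
      exact ⟨hA, subset_trans hPD (hDom_range J (hparts' J hJ).2)⟩
    · rw [hreindex]
      rw [if_pos hex] at hMs
      linarith
  · -- extra part for the two half arcs
    have hqne : v (q - 1) ≠ v q := by rw [hqv]; exact hqflank1
    have hq1ne : v q ≠ v (q + 1) := by rw [hqv]; exact fun h => hqflank2 h.symm
    have htnE : tnodes (fun i => (v i, v (i + 1))) {q - 1, q}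
        = insert (v (q - 1)) {v q, v (q + 1)} := by
      show tnodes (fun i => (v i, v (i + 1))) (insert (q - 1) {q}) = _
      rw [tnodes_insert, tnodes_singleton]
      show insert (v (q - 1)) (insert (v (q - 1 + 1)) {v q, v (q + 1)}) = _
      rw [show q - 1 + 1 = q by omega]
      congr 1
      exact Finset.insert_eq_self.2 (Finset.mem_insert_self _ _)
    have hvq1 : v (q - 1) ∉ ({v q, v (q + 1)} : Finset ℕ) := by
      intro hmem
      rcases Finset.mem_insert.1 hmem with h | h
      · exact hqne h
      · rw [Finset.mem_singleton] at h; exact hflank h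
    have hEtree : ATree (fun i => (v i, v (i + 1))) {q - 1, q} := by
      refine ⟨⟨q - 1, Finset.mem_insert_self _ _⟩, ?_, ?_⟩
      · rw [htnE, Finset.card_insert_of_notMem hvq1,
          Finset.card_insert_of_notMem (by rw [Finset.mem_singleton]; exact hq1ne),
          Finset.card_singleton,
          Finset.card_insert_of_notMem (by rw [Finset.mem_singleton]; omega),
          Finset.card_singleton]
      · apply tconn_of_hub (z₀ := v q)
        intro z hz
        rw [htnE] at hz
        have hstep1 : tstep (fun i => (v i, v (i + 1))) {q - 1, q} (v (q - 1)) (v q) := by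
          refine ⟨q - 1, Finset.mem_insert_self _ _, Or.inl ?_⟩
          show (v (q - 1), v (q - 1 + 1)) = _
          rw [show q - 1 + 1 = q by omega]
        have hstep2 : tstep (fun i => (v i, v (i + 1))) {q - 1, q} (v (q + 1)) (v q) := by
          exact ⟨q, Finset.mem_insert_of_mem (Finset.mem_singleton_self _), Or.inr rfl⟩
        rcases Finset.mem_insert.1 hz with rfl | hz
        · exact ReflTransGen.single hstep1
        rcases Finset.mem_insert.1 hz with rfl | hz
        · exact ReflTransGen.refl
        · rw [Finset.mem_singleton] at hz; subst hz
          exact ReflTransGen.single hstep2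
    have hEval : W μ ≤ tval (fun i => (v i, v (i + 1))) W {q - 1, q} := by
      unfold tval nval
      rw [htnE, Finset.sum_insert hvq1,
        Finset.sum_pair hq1ne]
      have hsup : (insert (v (q - 1)) ({v q, v (q + 1)} : Finset ℕ)).sup id
          = max (v (q - 1)) (max (v q) (v (q + 1))) := by
        rw [Finset.sup_insert, Finset.sup_insert, Finset.sup_singleton]
        rfl
      rw [hsup, hqv]
      have h1 : μ ≤ v (q - 1) := hμall (q - 1) (by omega)
      have h2 : μ ≤ v (q + 1) := hμall (q + 1) (by omega)
      rw [max_eq_right h2]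
      rcases le_total (v (q - 1)) (v (q + 1)) with hle | hle
      · rw [max_eq_right hle]
        have := hW0 (v (q - 1)); linarith
      · rw [max_eq_left hle]
        have := hW0 (v (q + 1)); linarith
    refine ⟨{q - 1, q} :: partsM, ?_, ?_, ?_⟩
    · rw [List.pairwise_cons]
      refine ⟨?_, hMd⟩
      intro Q hQ
      obtain ⟨_, J, hJ, hQsub⟩ := hMm Q hQ
      have hJq : q - 1 ∉ J := fun h => hex ⟨J, hJ, h⟩
      rw [Finset.disjoint_left]
      intro x hxE hxQ
      rcases hmem_dom J x (hQsub hxQ) with ⟨rfl, hc⟩ | ⟨rfl, hc⟩ | ⟨j, hj, hjne, hjx⟩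
      · exact hJq hc
      · exact hJq hc
      · rcases Finset.mem_insert.1 hxE with rfl | hxE
        · revert hjx; split <;> omega
        · rw [Finset.mem_singleton] at hxE; subst hxE
          revert hjx; split <;> omega
    · intro P hP
      rcases List.mem_cons.1 hP with rfl | hP
      · refine ⟨hEtree, ?_⟩
        intro x hx
        rcases Finset.mem_insert.1 hx with rfl | hx
        · exact Finset.mem_range.2 (by omega)
        · rw [Finset.mem_singleton] at hx; subst hx
          exact Finset.mem_range.2 (by omega)
      · obtain ⟨hA, J, hJ, hPD⟩ := hMm P hP
        exact ⟨hA, subset_trans hPD (hDom_range J (hparts' J hJ).2)⟩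
    · rw [List.map_cons, List.sum_cons, hreindex]
      rw [if_neg hex] at hMs
      linarith

end S17



section Interface

lemma widthSet_nonneg (Eall : Finset (Sym2 V)) (d : Sym2 V → ℝ) (hd : ∀ e, 0 ≤ d e)
    (T : Finset (V × V)) (Ws : Set V) : 0 ≤ widthSet Eall d T Ws := by
  apply Real.sSup_nonneg
  rintro x ⟨p, hp, h1, h2, rfl⟩
  apply Real.iInf_nonneg
  intro w
  apply List.sum_nonneg
  intro y hy
  obtain ⟨e, he, rfl⟩ := List.mem_map.1 hy
  exact hd e

lemma graphOf_mono {F G : Finset (Sym2 V)} (h : F ⊆ G) : graphOf F ≤ graphOf G :=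
  fun _ _ huv => ⟨huv.1, h huv.2⟩

lemma reachable_mono {F G : Finset (Sym2 V)} (h : F ⊆ G) {x y : V}
    (hr : (graphOf F).Reachable x y) : (graphOf G).Reachable x y :=
  SimpleGraph.Reachable.mono (graphOf_mono h) hr

end Interface

theorem stmt17_minimally_guarded
    (Eall : Finset (Sym2 V)) (d : Sym2 V → ℝ) (hd : ∀ e, 0 ≤ d e)
    (T : Finset (V × V)) (A : Finset (Sym2 V)) (hAE : A ⊆ Eall)
    (hAfeas : Feasible A T)
    (ci : V → ℕ)
    (hci : ∀ u v : V, ci u = ci v ↔ (graphOf A).Reachable u v)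
    (hmono : ∀ u v : V, ci u ≤ ci v →
      widthSet Eall d T ((graphOf A).connectedComponentMk u).supp ≤
        widthSet Eall d T ((graphOf A).connectedComponentMk v).supp)
    (c : ℝ) (hc : 1 ≤ c)
    (hopt : ConnApproxOptimal Eall Eall d T c A)
    (n : ℕ) (hn : 0 < n) (a b : Fin n → V)
    (hedges : ∀ i, s(a i, b i) ∈ Eall)
    (hcross : ∀ i, ¬ (graphOf A).Reachable (a i) (b i))
    (hconsec : ∀ i : Fin n,
      (graphOf A).Reachable (b i) (a ⟨((i : ℕ) + 1) % n, Nat.mod_lt _ hn⟩))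
    (hinj : Function.Injective (fun i : Fin n => s(a i, b i)))
    (hguard : ∀ i : Fin n, i ≠ ⟨0, hn⟩ → ci (a i) < ci (a ⟨0, hn⟩))
    (hmin : ∀ i₁ i₂ : Fin n, (⟨0, hn⟩ : Fin n) < i₁ → i₁ < i₂ →
      ci (a i₁) = ci (a i₂) → ∃ j : Fin n, i₁ < j ∧ j < i₂ ∧ ci (a i₁) ≤ ci (a j)) :
    ∑ i ∈ Finset.univ.filter (fun i : Fin n => i ≠ ⟨0, hn⟩),
        widthSet Eall d T ((graphOf A).connectedComponentMk (a i)).supp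
      ≤ c * ∑ i : Fin n, d s(a i, b i) := by
  classical
  rcases Nat.lt_or_ge n 2 with hn2 | hn2
  · -- n = 1 : the sum on the left is empty
    have hempty : (Finset.univ.filter (fun i : Fin n => i ≠ ⟨0, hn⟩)) = ∅ := by
      ext i
      simp only [Finset.mem_filter, Finset.mem_univ, true_and, Finset.notMem_empty, iff_false,
        not_not, Decidable.not_not]
      apply Fin.ext
      omega
    rw [hempty, Finset.sum_empty]
    apply mul_nonneg (by linarith)
    exact Finset.sum_nonneg fun i _ => hd _
  -- main case : n ≥ 2
  haveI hNV : Nonempty V := ⟨a ⟨0, hn⟩⟩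
  set wd : V → ℝ := fun u => widthSet Eall d T ((graphOf A).connectedComponentMk u).supp with hwd
  set idx : ℕ → Fin n := fun p => ⟨p % n, Nat.mod_lt _ hn⟩ with hidxdef
  set v : ℕ → ℕ := fun p => ci (a (idx p)) with hvdef
  have hvfin : ∀ i : Fin n, v (i : ℕ) = ci (a i) := by
    intro i
    rw [hvdef]
    simp only
    congr 2
    apply Fin.ext
    show (i : ℕ) % n = (i : ℕ)
    exact Nat.mod_eq_of_lt i.isLt
  have hvp : ∀ p (h : p < n), v p = ci (a ⟨p, h⟩) := fun p h => hvfin ⟨p, h⟩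
  have hv0 : v 0 = ci (a ⟨0, hn⟩) := hvp 0 hn
  have hcycv : v n = v 0 := by
    rw [hvdef]
    simp only
    congr 2
    apply Fin.ext
    show n % n = 0 % n
    simp
  have hcomp_eq : ∀ x y : V, ci x = ci y ↔
      ((graphOf A).connectedComponentMk x = (graphOf A).connectedComponentMk y) := by
    intro x y
    exact (hci x y).trans (SimpleGraph.ConnectedComponent.eq).symm
  have hwd_eq : ∀ x y : V, ci x = ci y → wd x = wd y := by
    intro x y h
    rw [hwd]
    simp only
    rw [(hcomp_eq x y).1 h]
  have hbsucc : ∀ i : Fin n, ci (b i) = v ((i : ℕ) + 1) := by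
    intro i
    have h2 : ci (b i) = ci (a ⟨((i : ℕ) + 1) % n, Nat.mod_lt _ hn⟩) := (hci _ _).2 (hconsec i)
    rw [h2, hvdef]
  have hnev : ∀ p, p < n → v p ≠ v (p + 1) := by
    intro p hp heq
    have h1 : v (p + 1) = ci (b ⟨p, hp⟩) := (hbsucc ⟨p, hp⟩).symm
    rw [hvp p hp, h1] at heq
    exact hcross ⟨p, hp⟩ ((hci _ _).1 heq)
  have hrootv : ∀ p, 0 < p → p < n → v p < v 0 := by
    intro p h0 hp
    rw [hvp p hp, hv0]
    apply hguard
    intro h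
    rw [Fin.ext_iff] at h
    simp only at h
    omega
  have hrulv : ∀ p q, 0 < p → p < q → q < n → v p = v q → ∃ r, p < r ∧ r < q ∧ v p < v r := by
    have key : ∀ gap p q : ℕ, q - p ≤ gap → 0 < p → p < q → q < n → v p = v q →
        ∃ r, p < r ∧ r < q ∧ v p < v r := by
      intro gap
      induction gap with
      | zero => intro p q h h0 hpq _ _; omega
      | succ g ih =>
        intro p q hgap h0 hpq hqn heq
        have hpn : p < n := by omega
        obtain ⟨j, hj1, hj2, hj3⟩ := hmin ⟨p, hpn⟩ ⟨q, hqn⟩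
          (by simp only [Fin.lt_def, Fin.val_mk]; exact h0)
          (by simp only [Fin.lt_def, Fin.val_mk]; exact hpq)
          (by rw [← hvp p hpn, ← hvp q hqn]; exact heq)
        simp only [Fin.lt_def, Fin.val_mk] at hj1 hj2
        have hjn : (j : ℕ) < n := j.isLt
        have hj3' : v p ≤ v (j : ℕ) := by
          rw [hvp p hpn, hvfin j]
          exact hj3
        rcases lt_or_eq_of_le hj3' with hlt | heq2
        · exact ⟨(j : ℕ), hj1, hj2, hlt⟩
        · obtain ⟨r, h1, h2, h3⟩ := ih p (j : ℕ) (by omega) h0 hj1 hjn heq2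
          exact ⟨r, h1, by omega, h3⟩
    intro p q
    exact key (q - p) p q le_rfl
  set rep : ℕ → V := fun t => if h : ∃ u : V, ci u = t then h.choose else a ⟨0, hn⟩ with hrepdef
  have hrep : ∀ t, (∃ u : V, ci u = t) → ci (rep t) = t := by
    intro t h
    rw [hrepdef]
    simp only [dif_pos h]
    exact h.choose_spec
  set W : ℕ → ℝ := fun t => wd (rep t) with hWdef
  have hW0 : ∀ t, 0 ≤ W t := by
    intro t
    rw [hWdef]
    exact widthSet_nonneg Eall d hd T _
  have hWci : ∀ u : V, W (ci u) = wd u := by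
    intro u
    rw [hWdef]
    exact hwd_eq _ _ (hrep (ci u) ⟨u, rfl⟩)
  obtain ⟨parts, hdisjp, hpartsp, hsump⟩ := S17.abs_main W hW0 n hn2 v hcycv hrootv hnev hrulv
  set pr := fun i : ℕ => (v i, v (i + 1)) with hprdef
  set dd : ℕ → ℝ := fun i => d s(a (idx i), b (idx i)) with hdddef
  have habne : ∀ i : Fin n, a i ≠ b i := by
    intro i h
    exact hcross i (h ▸ SimpleGraph.Reachable.refl (a i))
  have hpart : ∀ I : Finset ℕ, S17.ATree pr I → I ⊆ Finset.range n →
      S17.tval pr W I ≤ c * ∑ i ∈ I, dd i := by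
    intro I hIA hIr
    set B : Finset (Sym2 V) := I.image (fun i => s(a (idx i), b (idx i))) with hBdef
    have hedge_inj : ∀ i₁ ∈ I, ∀ i₂ ∈ I,
        s(a (idx i₁), b (idx i₁)) = s(a (idx i₂), b (idx i₂)) → i₁ = i₂ := by
      intro i₁ h₁ i₂ h₂ he
      have hfin : idx i₁ = idx i₂ := hinj he
      have h₁n := Finset.mem_range.1 (hIr h₁)
      have h₂n := Finset.mem_range.1 (hIr h₂)
      have hval : i₁ % n = i₂ % n := congrArg Fin.val hfin
      rw [Nat.mod_eq_of_lt h₁n, Nat.mod_eq_of_lt h₂n] at hval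
      exact hval
    have hBcard : B.card = I.card := Finset.card_image_of_injOn hedge_inj
    have hBsub : B ⊆ Eall := by
      intro e he
      obtain ⟨i, hi, rfl⟩ := Finset.mem_image.1 he
      exact hedges (idx i)
    have hsupp : ∀ x : V, x ∈ suppF B ↔ ∃ i ∈ I, x = a (idx i) ∨ x = b (idx i) := by
      intro x
      rw [suppF, Finset.mem_filter]
      simp only [Finset.mem_univ, true_and]
      constructor
      · rintro ⟨e, he, hx⟩
        obtain ⟨i, hi, rfl⟩ := Finset.mem_image.1 he
        rw [Sym2.mem_iff] at hx
        exact ⟨i, hi, hx⟩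
      · rintro ⟨i, hi, hx⟩
        exact ⟨s(a (idx i), b (idx i)), Finset.mem_image_of_mem _ hi, Sym2.mem_iff.2 hx⟩
    have hciav : ∀ i, ci (a (idx i)) = v i := fun i => rfl
    have hcibv : ∀ i ∈ I, ci (b (idx i)) = v (i + 1) := by
      intro i hi
      have hin := Finset.mem_range.1 (hIr hi)
      rw [hbsucc (idx i)]
      congr 1
      show (i % n) + 1 = i + 1
      rw [Nat.mod_eq_of_lt hin]
    set Φ : ℕ → (graphOf A).ConnectedComponent :=
      fun t => (graphOf A).connectedComponentMk (rep t) with hΦdef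
    have hΦci : ∀ x : V, Φ (ci x) = (graphOf A).connectedComponentMk x := by
      intro x
      exact ((hcomp_eq _ _).1 (hrep (ci x) ⟨x, rfl⟩))
    have htouched : touched A B = (S17.tnodes pr I).image Φ := by
      rw [touched]
      apply Finset.Subset.antisymm
      · intro t ht
        obtain ⟨x, hx, rfl⟩ := Finset.mem_image.1 ht
        obtain ⟨i, hi, hor⟩ := (hsupp x).1 hx
        rcases hor with rfl | rfl
        · rw [← hΦci (a (idx i))]
          apply Finset.mem_image_of_mem
          have h2 : ci (a (idx i)) = (pr i).1 := hciav i
          rw [h2]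
          exact S17.fst_mem_tnodes hi
        · rw [← hΦci (b (idx i))]
          apply Finset.mem_image_of_mem
          have h2 : ci (b (idx i)) = (pr i).2 := hcibv i hi
          rw [h2]
          exact S17.snd_mem_tnodes hi
      · intro t ht
        obtain ⟨s, hs, rfl⟩ := Finset.mem_image.1 ht
        obtain ⟨i, hi, hor⟩ := S17.mem_tnodes.1 hs
        rcases hor with h | h
        · have h2 : s = ci (a (idx i)) := by rw [← h]
          rw [h2, hΦci]
          exact Finset.mem_image_of_mem _ ((hsupp _).2 ⟨i, hi, Or.inl rfl⟩)
        · have h2 : s = ci (b (idx i)) := by rw [← h]; exact (hcibv i hi).symm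
          rw [h2, hΦci]
          exact Finset.mem_image_of_mem _ ((hsupp _).2 ⟨i, hi, Or.inr rfl⟩)
    have htn_real : ∀ t ∈ S17.tnodes pr I, ∃ u : V, ci u = t := by
      intro t ht
      obtain ⟨i, hi, hor⟩ := S17.mem_tnodes.1 ht
      rcases hor with h | h
      · exact ⟨a (idx i), by rw [hciav i]; exact h⟩
      · exact ⟨b (idx i), by rw [hcibv i hi]; exact h⟩
    have hΦinj : ∀ t₁ ∈ S17.tnodes pr I, ∀ t₂ ∈ S17.tnodes pr I, Φ t₁ = Φ t₂ → t₁ = t₂ := by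
      intro t₁ h₁ t₂ h₂ he
      have e1 : ci (rep t₁) = t₁ := hrep _ (htn_real _ h₁)
      have e2 : ci (rep t₂) = t₂ := hrep _ (htn_real _ h₂)
      rw [← e1, ← e2]
      exact (hcomp_eq _ _).2 he
    have hcardt : (touched A B).card = B.card + 1 := by
      rw [htouched, Finset.card_image_of_injOn hΦinj, hIA.2.1, hBcard]
    have hcrossB : ∀ e ∈ B, crossingEdge A e := by
      intro e he
      obtain ⟨i, hi, rfl⟩ := Finset.mem_image.1 he
      intro x y hxy hr
      rcases Sym2.eq_iff.1 hxy with ⟨h1, h2⟩ | ⟨h1, h2⟩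
      · subst h1; subst h2
        exact hcross (idx i) hr
      · subst h1; subst h2
        exact hcross (idx i) hr.symm
    have hAB : A ⊆ A ∪ B := Finset.subset_union_left
    have hr_base : ∀ x y : V, ci x = ci y → (graphOf (A ∪ B)).Reachable x y := by
      intro x y h
      exact reachable_mono hAB ((hci x y).1 h)
    have hadj : ∀ i ∈ I, (graphOf (A ∪ B)).Reachable (a (idx i)) (b (idx i)) := by
      intro i hi
      apply SimpleGraph.Adj.reachable
      exact ⟨habne (idx i), Finset.mem_union_right _ (Finset.mem_image_of_mem _ hi)⟩
    have hreach : ∀ s t : ℕ, Relation.ReflTransGen (S17.tstep pr I) s t →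
        ∀ x y : V, ci x = s → ci y = t → (graphOf (A ∪ B)).Reachable x y := by
      intro s t h
      induction h with
      | refl =>
        intro x y hx hy
        exact hr_base x y (by rw [hx, hy])
      | @tail z w hsz hzw ih =>
        intro x y hx hy
        obtain ⟨i, hi, hor⟩ := hzw
        rcases hor with h1 | h1
        · have hz : ci (a (idx i)) = z := by rw [hciav i]; exact congrArg Prod.fst h1
          have hw : ci (b (idx i)) = w := by rw [hcibv i hi]; exact congrArg Prod.snd h1
          exact ((ih x (a (idx i)) hx hz).trans (hadj i hi)).trans
            (hr_base _ _ (by rw [hw, hy]))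
        · have hz : ci (b (idx i)) = z := by rw [hcibv i hi]; exact congrArg Prod.snd h1
          have hw : ci (a (idx i)) = w := by rw [hciav i]; exact congrArg Prod.fst h1
          exact ((ih x (b (idx i)) hx hz).trans (hadj i hi).symm).trans
            (hr_base _ _ (by rw [hw, hy]))
    have hconnB : ∀ x ∈ suppF B, ∀ y ∈ suppF B, (graphOf (A ∪ B)).Reachable x y := by
      intro x hx y hy
      have hxt : ci x ∈ S17.tnodes pr I := by
        obtain ⟨i, hi, hor⟩ := (hsupp x).1 hx
        rcases hor with rfl | rfl
        · rw [hciav i]; exact S17.fst_mem_tnodes hi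
        · rw [hcibv i hi]; exact S17.snd_mem_tnodes hi
      have hyt : ci y ∈ S17.tnodes pr I := by
        obtain ⟨i, hi, hor⟩ := (hsupp y).1 hy
        rcases hor with rfl | rfl
        · rw [hciav i]; exact S17.fst_mem_tnodes hi
        · rw [hcibv i hi]; exact S17.snd_mem_tnodes hi
      exact hreach _ _ (hIA.2.2 _ hxt _ hyt) x y rfl rfl
    have hopt' := hopt B hBsub ⟨hcrossB, hcardt, hconnB⟩
    have hWnode : ∀ t ∈ S17.tnodes pr I, widthSet Eall d T (Φ t).supp = W t := by
      intro t ht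
      rfl
    have hwsum : ∑ t ∈ touched A B, widthSet Eall d T t.supp = ∑ t ∈ S17.tnodes pr I, W t := by
      rw [htouched, Finset.sum_image hΦinj]
    have hIne : (S17.tnodes pr I).Nonempty := by
      obtain ⟨i, hi⟩ := hIA.1
      exact ⟨(pr i).1, S17.fst_mem_tnodes hi⟩
    set M := (S17.tnodes pr I).sup id with hMdef
    have hMmem : M ∈ S17.tnodes pr I := S17.sup_mem_of_nonempty hIne
    haveI : Finite ((graphOf A).ConnectedComponent) := Quot.finite _
    haveI : Nonempty ((graphOf A).ConnectedComponent) :=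
      ⟨(graphOf A).connectedComponentMk (a ⟨0, hn⟩)⟩
    have hbdd : BddAbove (Set.range fun t : (graphOf A).ConnectedComponent =>
        ⨆ _ : t ∈ touched A B, widthSet Eall d T t.supp) :=
      Set.Finite.bddAbove (Set.finite_range _)
    have hsup_eq : (⨆ t ∈ touched A B, widthSet Eall d T t.supp) = W M := by
      apply le_antisymm
      · apply ciSup_le
        intro t
        by_cases ht : t ∈ touched A B
        · rw [ciSup_pos ht]
          rw [htouched] at ht
          obtain ⟨s, hs, rfl⟩ := Finset.mem_image.1 ht
          rw [hWnode s hs]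
          have hsle : s ≤ M := Finset.le_sup (f := id) hs
          rw [hWdef]
          simp only
          apply hmono
          rw [hrep s (htn_real s hs), hrep M (htn_real M hMmem)]
          exact hsle
        · haveI : IsEmpty (t ∈ touched A B) := ⟨ht⟩
          rw [Real.iSup_of_isEmpty]
          exact hW0 M
      · have h2 : Φ M ∈ touched A B := by
          rw [htouched]
          exact Finset.mem_image_of_mem _ hMmem
        refine le_ciSup_of_le hbdd (Φ M) ?_
        rw [ciSup_pos h2, hWnode M hMmem]
    have hdsum : ∑ e ∈ B, d e = ∑ i ∈ I, dd i := by
      rw [hBdef, Finset.sum_image hedge_inj]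
    calc S17.tval pr W I
        = (∑ t ∈ touched A B, widthSet Eall d T t.supp)
            - (⨆ t ∈ touched A B, widthSet Eall d T t.supp) := by
          unfold S17.tval S17.nval
          rw [← hwsum, hsup_eq, ← hMdef]
      _ ≤ c * ∑ e ∈ B, d e := hopt'
      _ = c * ∑ i ∈ I, dd i := by rw [hdsum]
  -- re-indexing of the goal sum
  have himg2 : (Finset.univ.filter (fun i : Fin n => i ≠ ⟨0, hn⟩)).image (fun i : Fin n => (i : ℕ))
      = Finset.Ioo 0 n := by
    ext p
    simp only [Finset.mem_image, Finset.mem_filter, Finset.mem_univ, true_and, Finset.mem_Ioo]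
    constructor
    · rintro ⟨i, hi, rfl⟩
      refine ⟨?_, i.isLt⟩
      rcases Nat.eq_zero_or_pos (i : ℕ) with h | h
      · exact absurd (Fin.ext h) hi
      · exact h
    · rintro ⟨h0, hp⟩
      refine ⟨⟨p, hp⟩, ?_, rfl⟩
      intro h
      rw [Fin.ext_iff] at h
      simp only [Fin.val_mk] at h
      omega
  have hgoalL : ∑ i ∈ Finset.univ.filter (fun i : Fin n => i ≠ ⟨0, hn⟩),
      widthSet Eall d T ((graphOf A).connectedComponentMk (a i)).supp
      = ∑ p ∈ Finset.Ioo 0 n, W (v p) := by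
    rw [← himg2, Finset.sum_image (fun i _ j _ h => Fin.ext h)]
    apply Finset.sum_congr rfl
    intro i hi
    rw [hvfin i, hWci]
  have hlist1 : (parts.map (S17.tval pr W)).sum
      ≤ (parts.map (fun I => c * ∑ i ∈ I, dd i)).sum := by
    apply List.sum_le_sum
    intro I hI
    exact hpart I (hpartsp I hI).1 (hpartsp I hI).2
  have hlist3 : ∀ L : List (Finset ℕ),
      (L.map (fun I => c * ∑ i ∈ I, dd i)).sum = c * (L.map (fun I => ∑ i ∈ I, dd i)).sum := by
    intro L
    induction L with
    | nil => simp
    | cons x l ih =>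
      rw [List.map_cons, List.sum_cons, List.map_cons, List.sum_cons, ih]
      ring
  have hlist2 : ∀ (L : List (Finset ℕ)) (S : Finset ℕ), List.Pairwise Disjoint L →
      (∀ I ∈ L, I ⊆ S) → (L.map (fun I => ∑ i ∈ I, dd i)).sum ≤ ∑ i ∈ S, dd i := by
    intro L
    induction L with
    | nil =>
      intro S _ _
      simp only [List.map_nil, List.sum_nil]
      exact Finset.sum_nonneg fun i _ => hd _
    | cons I L ih =>
      intro S hp hs
      rw [List.map_cons, List.sum_cons]
      have hIS : I ⊆ S := hs I (List.mem_cons_self)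
      have hLS : ∀ J ∈ L, J ⊆ S \ I := by
        intro J hJ x hx
        refine Finset.mem_sdiff.2 ⟨hs J (List.mem_cons_of_mem _ hJ) hx, fun hxI => ?_⟩
        exact Finset.disjoint_left.1 ((List.pairwise_cons.1 hp).1 J hJ) hxI hx
      have h2 := ih (S \ I) (List.pairwise_cons.1 hp).2 hLS
      have h3 : ∑ i ∈ S \ I, dd i + ∑ i ∈ I, dd i = ∑ i ∈ S, dd i := Finset.sum_sdiff hIS
      linarith
  have hrange : ∑ i ∈ Finset.range n, dd i = ∑ i : Fin n, d s(a i, b i) := by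
    rw [← Fin.sum_univ_eq_sum_range (fun i => dd i) n]
    apply Finset.sum_congr rfl
    intro i _
    rw [hdddef]
    simp only
    have hii : idx (i : ℕ) = i := by
      apply Fin.ext
      show (i : ℕ) % n = (i : ℕ)
      exact Nat.mod_eq_of_lt i.isLt
    rw [hii]
  have hfinal := hlist2 parts (Finset.range n) hdisjp (fun I hI => (hpartsp I hI).2)
  rw [hgoalL]
  calc ∑ p ∈ Finset.Ioo 0 n, W (v p)
      ≤ (parts.map (S17.tval pr W)).sum := hsump
    _ ≤ (parts.map (fun I => c * ∑ i ∈ I, dd i)).sum := hlist1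
    _ = c * (parts.map (fun I => ∑ i ∈ I, dd i)).sum := hlist3 parts
    _ ≤ c * ∑ i ∈ Finset.range n, dd i := by
        apply mul_le_mul_of_nonneg_left hfinal (by linarith)
    _ = c * ∑ i : Fin n, d s(a i, b i) := by rw [hrange]
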